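/- Let R be a commutative ring, let n ≥ 1 and q ≥ 2 be integers, and work in the polynomial ring R[x₁, …, xₙ]. For 1 ≤ i ≤ n let e_i denote the i-th elementary symmetric polynomial in x₁, …, xₙ, and let e_i^{(q)} = e_i(x₁^q, …, xₙ^q) denote the image of e_i under the R-algebra endomorphism sending each x_j to x_j^q. Then the R-subalgebra R[e₁, …, eₙ] generated by e₁, …, eₙ is contained in the R-submodule of R[x₁, …, xₙ] spanned by the set of all products e₁^{a₁} e₂^{a₂} ⋯ eₙ^{aₙ} with 0 ≤ a_j ≤ q − 1 for all j, together with the set of all products g · (e_i^{(q)} − e_i) where 1 ≤ i ≤ n and g ranges over R[e₁, …, eₙ]. -/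

import Mathlib

open MvPolynomial

namespace EsymmSpanAux

open AddMonoidAlgebra Finset

variable {R : Type*} [CommRing R] {n q : ℕ}

/-- abbreviation for the elementary symmetric polynomials -/
noncomputable def E (R : Type*) [CommRing R] (n : ℕ) (i : Fin n) : MvPolynomial (Fin n) R :=
  esymm (Fin n) R ((i : ℕ) + 1)

/-- the product of powers of the elementary symmetric polynomials -/
noncomputable def prodpow (R : Type*) [CommRing R] {n : ℕ} (b : Fin n →₀ ℕ) :
    MvPolynomial (Fin n) R :=
  ∏ j : Fin n, E R n j ^ b j

/-- lex degree of the leading monomial of `prodpow b` -/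
noncomputable def Λ (n : ℕ) (b : Fin n →₀ ℕ) : Lex (Fin n →₀ ℕ) :=
  toLex (Finsupp.equivFunOnFinite.symm (Fin.accumulate n n ⇑b))

lemma ofLex_Λ (b : Fin n →₀ ℕ) : ⇑(ofLex (Λ n b)) = Fin.accumulate n n ⇑b := rfl

lemma Λ_add (b c : Fin n →₀ ℕ) : Λ n (b + c) = Λ n b + Λ n c := by
  have h : (Finsupp.equivFunOnFinite.symm (Fin.accumulate n n ⇑(b + c)) : Fin n →₀ ℕ)
      = Finsupp.equivFunOnFinite.symm (Fin.accumulate n n ⇑b)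
        + Finsupp.equivFunOnFinite.symm (Fin.accumulate n n ⇑c) := by
    ext i
    simp [Finsupp.coe_add, map_add]
  unfold Λ
  rw [h, toLex_add]

lemma Λ_smul (k : ℕ) (b : Fin n →₀ ℕ) : Λ n (k • b) = k • Λ n b := by
  have h : (Finsupp.equivFunOnFinite.symm (Fin.accumulate n n ⇑(k • b)) : Fin n →₀ ℕ)
      = k • Finsupp.equivFunOnFinite.symm (Fin.accumulate n n ⇑b) := by
    ext i
    simp [Finsupp.coe_smul, Fin.accumulate_apply, Finset.mul_sum]
  unfold Λ
  rw [h, toLex_smul]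
  rfl

lemma prodpow_add (b c : Fin n →₀ ℕ) :
    prodpow R (b + c) = prodpow R b * prodpow R c := by
  simp [prodpow, Finsupp.add_apply, pow_add, Finset.prod_mul_distrib]

lemma prodpow_single (j : Fin n) (k : ℕ) :
    prodpow R (Finsupp.single j k) = E R n j ^ k := by
  unfold prodpow
  rw [Finset.prod_eq_single_of_mem j (Finset.mem_univ j)
    (fun i _ hij => by rw [Finsupp.single_eq_of_ne hij, pow_zero]),
    Finsupp.single_eq_same]

lemma esymmAlgHomMonomial_eq (b : Fin n →₀ ℕ) (r : R) :
    esymmAlgHomMonomial (Fin n) b r = r • prodpow R b := by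
  rw [esymmAlgHomMonomial, esymmAlgHom_apply, aeval_monomial, Finsupp.prod_pow,
    smul_eq_C_mul, algebraMap_eq]
  rfl

lemma Λ_supDegree [Nontrivial R] (b : Fin n →₀ ℕ) {r : R} (hr : r ≠ 0) :
    supDegree toLex (esymmAlgHomMonomial (Fin n) b r) = Λ n b := by
  rw [← ofLex_inj]
  apply DFunLike.ext'
  rw [supDegree_esymmAlgHomMonomial hr b le_rfl, ofLex_Λ]

lemma expand_monomial' (hq : q ≠ 0) (d : Fin n →₀ ℕ) (r : R) :
    expand q (monomial d r) = monomial (q • d) r := by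
  rw [expand_monomial, monomial_eq]

lemma smul_injective (hq : q ≠ 0) :
    Function.Injective (fun t : Fin n →₀ ℕ => q • t) := by
  intro x y h
  ext i
  have := DFunLike.congr_fun h i
  simp only [Finsupp.smul_apply, smul_eq_mul] at this
  exact Nat.eq_of_mul_eq_mul_left (Nat.pos_of_ne_zero hq) this

lemma expand_eq_mapDomain (hq : q ≠ 0) (f : MvPolynomial (Fin n) R) :
    expand q f = AddMonoidAlgebra.mapDomain (fun t => q • t) f := by
  induction f using AddMonoidAlgebra.induction_linear with
  | zero => simp [AddMonoidAlgebra.mapDomain_zero, map_zero]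
  | add f g hf hg => rw [AddMonoidAlgebra.mapDomain_add, ← hf, ← hg, map_add]
  | single d r =>
    rw [AddMonoidAlgebra.mapDomain_single, single_eq_monomial, single_eq_monomial,
      expand_monomial' hq]

lemma supDegree_expand [Nontrivial R] (hq : q ≠ 0) {f : MvPolynomial (Fin n) R} (hf : f ≠ 0) :
    supDegree toLex (expand q f : MvPolynomial (Fin n) R) = q • supDegree toLex f ∧
    leadingCoeff toLex (expand q f : MvPolynomial (Fin n) R) = leadingCoeff toLex f := by
  obtain ⟨t₀, ht₀, hsup⟩ := exists_supDegree_mem_support (p := f) toLex hf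
  have hinj := smul_injective (n := n) hq
  have hsupp : (AddMonoidAlgebra.mapDomain (fun t => q • t) f).coeff.support
      = (AddMonoidAlgebra.coeff f).support.image (fun t => q • t) :=
    Finsupp.mapDomain_support_of_injective hinj (AddMonoidAlgebra.coeff f)
  have hmain : supDegree toLex (expand q f : MvPolynomial (Fin n) R) = toLex (q • t₀) := by
    rw [expand_eq_mapDomain hq, supDegree, hsupp, Finset.sup_image]
    apply le_antisymm
    · refine Finset.sup_le fun t ht => ?_
      have h1 : toLex t ≤ toLex t₀ := hsup ▸ Finset.le_sup (f := toLex) ht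
      rcases eq_or_lt_of_le h1 with he | hlt
      · have ht' : t = t₀ := toLex.injective he
        subst ht'
        exact le_rfl
      · exact le_of_lt (by
          rw [Function.comp_apply, toLex_smul, toLex_smul]
          exact nsmul_lt_nsmul_right hq hlt)
    · exact Finset.le_sup (f := (toLex ∘ fun t => q • t)) ht₀
  constructor
  · rw [hmain, hsup, toLex_smul]
    rfl
  · rw [leadingCoeff, leadingCoeff, hmain, hsup,
      Function.leftInverse_invFun toLex.injective, Function.leftInverse_invFun toLex.injective]
    rw [expand_eq_mapDomain hq]
    exact Finsupp.mapDomain_apply hinj (AddMonoidAlgebra.coeff f) t₀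

lemma isSymmetric_expand {f : MvPolynomial (Fin n) R} (hf : f.IsSymmetric) :
    (expand q f : MvPolynomial (Fin n) R).IsSymmetric := by
  intro e
  rw [rename_expand, hf]

/-- Lemma C : a symmetric polynomial of lex sup-degree at most `d` lies in the span of
the `prodpow b` with `Λ b ≤ d`. -/
lemma symm_mem_span [Nontrivial R] (d : Lex (Fin n →₀ ℕ)) :
    ∀ f : MvPolynomial (Fin n) R, f.IsSymmetric → supDegree toLex f ≤ d →
      f ∈ Submodule.span R {x : MvPolynomial (Fin n) R |
        ∃ b : Fin n →₀ ℕ, Λ n b ≤ d ∧ x = prodpow R b} := by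
  intro f hsym hle
  induction' he : f.supDegree toLex using WellFoundedLT.induction with u ih generalizing f
  subst he
  obtain rfl | h0 := eq_or_ne f 0
  · exact Submodule.zero_mem _
  have hlc : f.leadingCoeff toLex ≠ 0 := by
    rwa [Ne, leadingCoeff_eq_zero toLex.injective]
  set t : Fin n →₀ ℕ :=
    Finsupp.equivFunOnFinite.symm (Fin.invAccumulate n n <| ↑(ofLex <| f.supDegree toLex))
    with ht
  have hd : (esymmAlgHomMonomial (Fin n) t <| f.leadingCoeff toLex).supDegree toLex
      = f.supDegree toLex := by
    rw [← ofLex_inj, DFunLike.ext'_iff, supDegree_esymmAlgHomMonomial hlc _ le_rfl]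
    exact Fin.accumulate_invAccumulate le_rfl hsym.antitone_supDegree
  have hΛt : Λ n t = f.supDegree toLex := (Λ_supDegree t hlc).symm.trans hd
  have hmem : esymmAlgHomMonomial (Fin n) t (f.leadingCoeff toLex) ∈
      Submodule.span R {x : MvPolynomial (Fin n) R |
        ∃ b : Fin n →₀ ℕ, Λ n b ≤ d ∧ x = prodpow R b} := by
    rw [esymmAlgHomMonomial_eq]
    exact Submodule.smul_mem _ _ (Submodule.subset_span ⟨t, hΛt ▸ hle, rfl⟩)
  obtain he | hne := eq_or_ne f (esymmAlgHomMonomial (Fin n) t <| f.leadingCoeff toLex)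
  · rw [he]; exact hmem
  have hlt := (supDegree_sub_lt_of_leadingCoeff_eq toLex.injective hd.symm
    (leadingCoeff_esymmAlgHomMonomial t le_rfl).symm).resolve_right hne
  have hsub := ih _ hlt (f - _)
    (hsym.sub (isSymmetric_esymmAlgHomMonomial _ _)) (hlt.le.trans hle) rfl
  have := Submodule.add_mem _ hsub hmem
  rwa [sub_add_cancel] at this

/-- Lemma B : `eⱼ^q - eⱼ^{(q)}` lies in the span of products `prodpow b` with
`Λ b < Λ (q • single j 1)`. -/
lemma key [Nontrivial R] (hq : 2 ≤ q) (j : Fin n) :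
    E R n j ^ q - expand q (E R n j) ∈ Submodule.span R {x : MvPolynomial (Fin n) R |
      ∃ b : Fin n →₀ ℕ, Λ n b < Λ n (q • Finsupp.single j 1) ∧ x = prodpow R b} := by
  have hq0 : q ≠ 0 := by omega
  have hmonic : Monic toLex (E R n j) := monic_esymm j.isLt
  have hsupE : supDegree toLex (E R n j) = Λ n (Finsupp.single j 1) := by
    rw [← ofLex_inj, DFunLike.ext'_iff, ofLex_Λ]
    exact supDegree_esymm j.isLt
  have hnz : E R n j ≠ 0 := hmonic.ne_zero
  have hpow_sup : supDegree toLex (E R n j ^ q) = Λ n (q • Finsupp.single j 1) := by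
    rw [hmonic.supDegree_pow rfl toLex_add toLex.injective, hsupE, Λ_smul]
  obtain ⟨hexp_sup, hexp_lc⟩ := supDegree_expand hq0 hnz
  have hd : supDegree toLex (E R n j ^ q)
      = supDegree toLex (expand q (E R n j) : MvPolynomial (Fin n) R) := by
    rw [hexp_sup, hmonic.supDegree_pow rfl toLex_add toLex.injective]
  have hc : leadingCoeff toLex (E R n j ^ q)
      = leadingCoeff toLex (expand q (E R n j) : MvPolynomial (Fin n) R) := by
    rw [hexp_lc, hmonic.pow toLex_add toLex.injective, hmonic]
  obtain hlt | heq := supDegree_sub_lt_of_leadingCoeff_eq toLex.injective hd hc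
  · have hsym : (E R n j ^ q - expand q (E R n j) : MvPolynomial (Fin n) R).IsSymmetric :=
      (((symmetricSubalgebra (Fin n) R).pow_mem (esymm_isSymmetric (Fin n) R _) q).sub
        (isSymmetric_expand (esymm_isSymmetric (Fin n) R _)))
    have hsub : {x : MvPolynomial (Fin n) R | ∃ b : Fin n →₀ ℕ,
          Λ n b ≤ supDegree toLex (E R n j ^ q - expand q (E R n j)) ∧ x = prodpow R b}
        ⊆ {x : MvPolynomial (Fin n) R | ∃ b : Fin n →₀ ℕ,
          Λ n b < Λ n (q • Finsupp.single j 1) ∧ x = prodpow R b} := by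
      rintro x ⟨b, hb, rfl⟩
      exact ⟨b, hb.trans_lt (hpow_sup ▸ hlt), rfl⟩
    exact Submodule.span_mono hsub
      (symm_mem_span (d := supDegree toLex (E R n j ^ q - expand q (E R n j))) _ hsym le_rfl)
  · rw [sub_eq_zero.mpr heq]
    exact Submodule.zero_mem _

lemma mem_adjoin_prodpow (b : Fin n →₀ ℕ) :
    prodpow R b ∈ Algebra.adjoin R
      (Set.range fun i : Fin n => esymm (Fin n) R ((i : ℕ) + 1)) :=
  Subalgebra.prod_mem _ fun i _ =>
    Subalgebra.pow_mem _ (Algebra.subset_adjoin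
      (s := Set.range fun i : Fin n => esymm (Fin n) R ((i : ℕ) + 1)) ⟨i, rfl⟩) _

lemma expand_eq_aeval (f : MvPolynomial (Fin n) R) :
    (expand q f : MvPolynomial (Fin n) R)
      = aeval (fun j : Fin n => (X j : MvPolynomial (Fin n) R) ^ q) f := by
  rw [expand, aeval_def]
  rfl

/-- the target spanning set -/
def targetSet (R : Type*) [CommRing R] (n q : ℕ) : Set (MvPolynomial (Fin n) R) :=
  {x : MvPolynomial (Fin n) R | ∃ a : Fin n → ℕ, (∀ j, a j ≤ q - 1) ∧
      x = ∏ j : Fin n, esymm (Fin n) R ((j : ℕ) + 1) ^ a j} ∪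
  {x : MvPolynomial (Fin n) R | ∃ i : Fin n,
      ∃ g ∈ Algebra.adjoin R
        (Set.range fun i : Fin n => esymm (Fin n) R ((i : ℕ) + 1)),
      x = g * (MvPolynomial.aeval (fun j : Fin n => (X j : MvPolynomial (Fin n) R) ^ q)
                  (esymm (Fin n) R ((i : ℕ) + 1))
                - esymm (Fin n) R ((i : ℕ) + 1))}

/-- Lemma A : each `prodpow a` lies in the span of the two distinguished sets. -/
lemma prodpow_mem [Nontrivial R] (hn : 1 ≤ n) (hq : 2 ≤ q) (a : Fin n →₀ ℕ) :
    prodpow R a ∈ Submodule.span R (targetSet R n q) := by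
  induction' hu : Λ n a using WellFoundedLT.induction with u ih generalizing a
  subst hu
  by_cases hsmall : ∀ j, a j ≤ q - 1
  · exact Submodule.subset_span (Or.inl ⟨⇑a, hsmall, rfl⟩ :
      prodpow R a ∈ targetSet R n q)
  push_neg at hsmall
  obtain ⟨j, hj⟩ := hsmall
  have hqa : q ≤ a j := by omega
  set a' : Fin n →₀ ℕ := a - q • Finsupp.single j 1 with ha'
  have hdecomp : a = a' + q • Finsupp.single j 1 := by
    ext i
    rcases eq_or_ne j i with rfl | hne
    · simp only [ha', Finsupp.add_apply, Finsupp.tsub_apply, Finsupp.smul_apply,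
        Finsupp.single_eq_same, smul_eq_mul, mul_one]
      omega
    · simp [ha', Finsupp.single_eq_of_ne hne.symm]
  have hsingle : (q • Finsupp.single j 1 : Fin n →₀ ℕ) = Finsupp.single j q := by
    rw [Finsupp.smul_single, smul_eq_mul, mul_one]
  have hga : prodpow R a = prodpow R a' * E R n j ^ q := by
    rw [hdecomp, prodpow_add, hsingle, prodpow_single]
  have hΛ_lt : ∀ b : Fin n →₀ ℕ, Λ n b < Λ n (q • Finsupp.single j 1) →
      Λ n (a' + b) < Λ n a := by
    intro b hb
    rw [hdecomp, Λ_add, Λ_add]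
    exact add_lt_add_right hb _
  -- the three pieces
  have h2 : prodpow R a' * ((expand q (E R n j) : MvPolynomial (Fin n) R) - E R n j)
      ∈ Submodule.span R (targetSet R n q) :=
    Submodule.subset_span (show _ ∈ targetSet R n q from Or.inr ⟨j, prodpow R a',
      mem_adjoin_prodpow a', by rw [expand_eq_aeval]; rfl⟩)
  have h3 : prodpow R a' * E R n j ∈ Submodule.span R (targetSet R n q) := by
    have heq : prodpow R a' * E R n j = prodpow R (a' + Finsupp.single j 1) := by
      rw [prodpow_add, prodpow_single, pow_one]
    have hpos : 0 < Λ n (Finsupp.single j 1) := by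
      have hle0 : (0 : Lex (Fin n →₀ ℕ)) ≤ Λ n (Finsupp.single j 1) :=
        Finsupp.toLex_monotone zero_le
      refine hle0.lt_of_ne fun h => ?_
      have h0 : Fin.accumulate n n ⇑(Finsupp.single j (1 : ℕ)) ⟨0, hn⟩ = 0 := by
        have h' := congrArg (fun z => (ofLex z) ⟨0, hn⟩) h
        simpa [ofLex_Λ] using h'.symm
      rw [Fin.accumulate_apply] at h0
      have hjmem : j ∈ Finset.univ.filter
          (fun i : Fin n => (⟨0, hn⟩ : Fin n).val ≤ i.val) := by
        simp
      have := Finset.sum_eq_zero_iff.mp h0 j hjmem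
      simp [Finsupp.single_apply] at this
    have hlt : Λ n (Finsupp.single j 1) < Λ n (q • Finsupp.single j 1) := by
      rw [Λ_smul]
      calc Λ n (Finsupp.single j 1) = 1 • Λ n (Finsupp.single j 1) := (one_smul _ _).symm
        _ < q • Λ n (Finsupp.single j 1) := nsmul_lt_nsmul_left hpos (by omega)
    rw [heq]
    exact ih _ (hΛ_lt _ hlt) _ rfl
  have h1 : prodpow R a' * (E R n j ^ q - (expand q (E R n j) : MvPolynomial (Fin n) R))
      ∈ Submodule.span R (targetSet R n q) := by
    have hk := key (R := R) hq j
    have hmem : prodpow R a' * (E R n j ^ q - (expand q (E R n j) : MvPolynomial (Fin n) R))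
        ∈ Submodule.map (LinearMap.mulLeft R (prodpow R a'))
          (Submodule.span R {x : MvPolynomial (Fin n) R |
            ∃ b : Fin n →₀ ℕ, Λ n b < Λ n (q • Finsupp.single j 1) ∧ x = prodpow R b}) :=
      Submodule.mem_map.mpr ⟨_, hk, rfl⟩
    rw [Submodule.map_span] at hmem
    refine Submodule.span_le.mpr ?_ hmem
    rintro x ⟨y, ⟨b, hb, rfl⟩, rfl⟩
    have : LinearMap.mulLeft R (prodpow R a') (prodpow R b) = prodpow R (a' + b) := by
      rw [LinearMap.mulLeft_apply, ← prodpow_add]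
    rw [this]
    exact ih _ (hΛ_lt _ hb) _ rfl
  have hsum : prodpow R a' * E R n j ^ q
      = prodpow R a' * (E R n j ^ q - (expand q (E R n j) : MvPolynomial (Fin n) R))
        + prodpow R a' * ((expand q (E R n j) : MvPolynomial (Fin n) R) - E R n j)
        + prodpow R a' * E R n j := by ring
  rw [hga, hsum]
  exact Submodule.add_mem _ (Submodule.add_mem _ h1 h2) h3

end EsymmSpanAux

/-- The subalgebra generated by the elementary symmetric polynomials `e₁, …, eₙ` is contained
in the module spanned by the monomials `e₁^{a₁} ⋯ eₙ^{aₙ}` with all `aⱼ ≤ q - 1` together with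
all products `g * (eᵢ^{(q)} - eᵢ)` with `g` in that subalgebra, where `eᵢ^{(q)}` is the image of
`eᵢ` under `xⱼ ↦ xⱼ^q`. -/
theorem esymm_span
    {R : Type*} [CommRing R] (n q : ℕ) (hn : 1 ≤ n) (hq : 2 ≤ q) :
    (Algebra.adjoin R
        (Set.range fun i : Fin n => esymm (Fin n) R ((i : ℕ) + 1)) : Set (MvPolynomial (Fin n) R))
      ⊆ (Submodule.span R
          ({x : MvPolynomial (Fin n) R | ∃ a : Fin n → ℕ, (∀ j, a j ≤ q - 1) ∧
              x = ∏ j : Fin n, esymm (Fin n) R ((j : ℕ) + 1) ^ a j} ∪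
           {x : MvPolynomial (Fin n) R | ∃ i : Fin n,
              ∃ g ∈ Algebra.adjoin R
                (Set.range fun i : Fin n => esymm (Fin n) R ((i : ℕ) + 1)),
              x = g * (MvPolynomial.aeval (fun j : Fin n => (X j : MvPolynomial (Fin n) R) ^ q)
                          (esymm (Fin n) R ((i : ℕ) + 1))
                        - esymm (Fin n) R ((i : ℕ) + 1))}) : Set (MvPolynomial (Fin n) R)) := by
  open EsymmSpanAux in
  intro p hp
  rcases subsingleton_or_nontrivial R with h | h
  · have hp0 : p = 0 := by
      ext d
      exact Subsingleton.elim _ _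
    simp only [SetLike.mem_coe]
    exact hp0 ▸ Submodule.zero_mem _
  · have hp' : p ∈ Submodule.span R
        ((Submonoid.closure
          (Set.range fun i : Fin n => esymm (Fin n) R ((i : ℕ) + 1)) : Submonoid _) :
            Set (MvPolynomial (Fin n) R)) := by
      rw [← Algebra.adjoin_eq_span]
      exact hp
    simp only [SetLike.mem_coe]
    refine Submodule.span_le.mpr ?_ hp'
    intro x hx
    have hxp : ∃ a : Fin n →₀ ℕ, x = prodpow R a := by
      refine Submonoid.closure_induction (fun y hy => ?_) ⟨0, by simp [prodpow]⟩
        (fun y z _ _ ⟨a, ha⟩ ⟨b, hb⟩ => ⟨a + b, by rw [ha, hb, prodpow_add]⟩) hx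
      obtain ⟨i, rfl⟩ := hy
      exact ⟨Finsupp.single i 1, by rw [prodpow_single, pow_one]; rfl⟩
    obtain ⟨a, rfl⟩ := hxp
    exact prodpow_mem hn hq a
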